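/- Let E/F be a quadratic extension of fields of characteristic zero and σ the nontrivial F-automorphism of E, acting entrywise on vectors and matrices over E. Let n ≥ 0, W = E^{n+1} with last standard basis vector e₀ and e₀* the last coordinate form. Identify GL_n over either field with the subgroup of GL_{n+1} of block-diagonal elements diag(g,1). Let Y, Y' ∈ GL_{n+1}(E) satisfy Y·σ(Y) = 1 and Y'·σ(Y') = 1. Assume det((e₀*(Y^{i+j} e₀))_{0 ≤ i,j ≤ n}) ≠ 0, that Y and Y' have the same characteristic polynomial, and that e₀*(Y^i e₀) = e₀*(Y'^i e₀) for all 0 ≤ i ≤ n. Then there exists a unique g ∈ GL_n(F) such that Y' = g Y g⁻¹. (In other words, the elements of {g ∈ GL_{n+1}(E) : g·σ(g) = 1} with given regular semisimple invariants form a single GL_n(F)-conjugacy orbit.) -/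

import Mathlib

open Matrix

section helpers

variable {E : Type*} [Field E] {n : ℕ}

def blk (A : Matrix (Fin n) (Fin n) E) : Matrix (Fin (n+1)) (Fin (n+1)) E :=
  Matrix.reindex finSumFinEquiv finSumFinEquiv (Matrix.fromBlocks A 0 0 1)

lemma blk_cc (A : Matrix (Fin n) (Fin n) E) (i j : Fin n) :
    blk A i.castSucc j.castSucc = A i j := by
  have hi : finSumFinEquiv.symm (i.castSucc) = Sum.inl i := finSumFinEquiv_symm_apply_castAdd i
  have hj : finSumFinEquiv.symm (j.castSucc) = Sum.inl j := finSumFinEquiv_symm_apply_castAdd j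
  simp [blk, Matrix.reindex_apply, Matrix.submatrix_apply, hi, hj]

lemma blk_cl (A : Matrix (Fin n) (Fin n) E) (i : Fin n) :
    blk A i.castSucc (Fin.last n) = 0 := by
  have hi : finSumFinEquiv.symm (i.castSucc) = Sum.inl i := finSumFinEquiv_symm_apply_castAdd i
  simp [blk, Matrix.reindex_apply, Matrix.submatrix_apply, hi, finSumFinEquiv_symm_last]

lemma blk_lc (A : Matrix (Fin n) (Fin n) E) (j : Fin n) :
    blk A (Fin.last n) j.castSucc = 0 := by
  have hj : finSumFinEquiv.symm (j.castSucc) = Sum.inl j := finSumFinEquiv_symm_apply_castAdd j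
  simp [blk, Matrix.reindex_apply, Matrix.submatrix_apply, hj, finSumFinEquiv_symm_last]

lemma blk_ll (A : Matrix (Fin n) (Fin n) E) :
    blk A (Fin.last n) (Fin.last n) = 1 := by
  simp [blk, Matrix.reindex_apply, Matrix.submatrix_apply, finSumFinEquiv_symm_last]

lemma blk_mul (A B : Matrix (Fin n) (Fin n) E) : blk A * blk B = blk (A * B) := by
  unfold blk
  rw [Matrix.reindex_apply, Matrix.reindex_apply, Matrix.reindex_apply,
    Matrix.submatrix_mul_equiv, Matrix.fromBlocks_multiply]
  simp

lemma blk_det (A : Matrix (Fin n) (Fin n) E) : (blk A).det = A.det := by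
  unfold blk
  rw [Matrix.reindex_apply, Matrix.det_submatrix_equiv_self, Matrix.det_fromBlocks_zero₂₁]
  simp

lemma blk_one : blk (1 : Matrix (Fin n) (Fin n) E) = 1 := by
  unfold blk
  rw [Matrix.fromBlocks_one, Matrix.reindex_apply, Matrix.submatrix_one_equiv]

end helpers


lemma fixed_mem_range (F E : Type*) [Field F] [Field E] [Algebra F E]
    (hquad : Module.finrank F E = 2)
    (σ : E ≃ₐ[F] E) (hσ : σ ≠ AlgEquiv.refl) (x : E) (hx : σ x = x) :
    ∃ a : F, algebraMap F E a = x := by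
  obtain ⟨y, hy⟩ : ∃ y, σ y ≠ y := by
    by_contra h
    push_neg at h
    exact hσ (AlgEquiv.ext fun z => h z)
  have hy1 : LinearIndependent F ![(1 : E), y] := by
    rw [LinearIndependent.pair_iff]
    intro s t hst
    rw [Algebra.smul_def, Algebra.smul_def, mul_one] at hst
    by_cases ht : t = 0
    · subst ht
      simp only [map_zero, zero_mul, add_zero] at hst
      exact ⟨(algebraMap F E).injective (by simpa using hst), rfl⟩
    · exfalso
      have ht' : algebraMap F E t ≠ 0 := by
        simpa using fun h => ht ((algebraMap F E).injective (by simpa using h))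
      have hyv : y = algebraMap F E (-s/t) := by
        rw [map_div₀, map_neg, eq_div_iff ht']
        linear_combination hst
      exact hy (by rw [hyv, AlgEquiv.commutes])
  have hcard : Fintype.card (Fin 2) = Module.finrank F E := by simp [hquad]
  let b : Module.Basis (Fin 2) F E := basisOfLinearIndependentOfCardEqFinrank hy1 hcard
  have hb : ∀ i, b i = ![(1:E), y] i := fun i => by
    rw [coe_basisOfLinearIndependentOfCardEqFinrank]
  have hxeq : x = b.repr x 0 • (1:E) + b.repr x 1 • y := by
    conv_lhs => rw [← b.sum_repr x]
    rw [Fin.sum_univ_two, hb 0, hb 1]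
    rfl
  have hσx : σ x = b.repr x 0 • (1:E) + b.repr x 1 • σ y := by
    conv_lhs => rw [hxeq]
    rw [map_add, _root_.map_smul, _root_.map_smul, _root_.map_one]
  have h1 : b.repr x 1 • σ y = b.repr x 1 • y := by
    apply add_left_cancel (a := b.repr x 0 • (1:E))
    rw [← hσx, hx]
    exact hxeq
  have h2 : b.repr x 1 = 0 := by
    have h3 : b.repr x 1 • (σ y - y) = 0 := by
      rw [smul_sub, h1, sub_self]
    rcases smul_eq_zero.mp h3 with h | h
    · exact h
    · exact absurd (by linear_combination h) hy
  refine ⟨b.repr x 0, ?_⟩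
  conv_rhs => rw [hxeq]
  rw [h2, zero_smul, add_zero, Algebra.algebraMap_eq_smul_one]



/-- Let `E/F` be a quadratic extension with conjugation `σ`, and let
`Y, Y' ∈ GL_{n+1}(E)` satisfy `Y σ(Y) = 1`, `Y' σ(Y') = 1`. If `Y` is regular semisimple
(i.e. `det ((e₀* (Y^{i+j} e₀)))_{0 ≤ i,j ≤ n} ≠ 0` where `e₀` is the last basis vector),
`Y` and `Y'` have the same characteristic polynomial and the same invariants
`e₀* (Y^i e₀)` for `0 ≤ i ≤ n`, then there is a unique `g ∈ GL_n(F)` with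
`Y' = diag(g,1) · Y · diag(g,1)⁻¹`. -/
theorem stmt_10 (F E : Type*) [Field F] [Field E] [CharZero F] [CharZero E] [Algebra F E]
    (hquad : Module.finrank F E = 2)
    (σ : E ≃ₐ[F] E) (hσ : σ ≠ AlgEquiv.refl)
    (n : ℕ) (Y Y' : Matrix (Fin (n + 1)) (Fin (n + 1)) E)
    (hY : Y * Y.map ⇑σ = 1) (hY' : Y' * Y'.map ⇑σ = 1)
    (hreg : (Matrix.of fun i j : Fin (n + 1) =>
        (Y ^ ((i : ℕ) + (j : ℕ))) (Fin.last n) (Fin.last n)).det ≠ 0)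
    (hchar : Y.charpoly = Y'.charpoly)
    (hinvs : ∀ i ≤ n, (Y ^ i) (Fin.last n) (Fin.last n) = (Y' ^ i) (Fin.last n) (Fin.last n)) :
    ∃! g : (Matrix (Fin n) (Fin n) F)ˣ,
      Y' =
        Matrix.reindex finSumFinEquiv finSumFinEquiv
            (Matrix.fromBlocks (((g : Matrix (Fin n) (Fin n) F)).map (algebraMap F E)) 0 0 1) *
          Y *
          Matrix.reindex finSumFinEquiv finSumFinEquiv
            (Matrix.fromBlocks (((↑g⁻¹ : Matrix (Fin n) (Fin n) F)).map (algebraMap F E)) 0 0 1) := by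
  classical
  set L := Fin.last n with hLdef
  set c : ℕ → E := fun i => Y.charpoly.coeff i with hcdef
  -- Cayley–Hamilton consequences
  have hdeg : Y.charpoly.natDegree = n + 1 := by
    rw [Matrix.charpoly_natDegree_eq_dim]; simp
  have hCHgen : ∀ Z : Matrix (Fin (n+1)) (Fin (n+1)) E, Z.charpoly = Y.charpoly →
      Z ^ (n+1) = -∑ i ∈ Finset.range (n+1), c i • Z ^ i := by
    intro Z hZ
    have h0 := Matrix.aeval_self_charpoly Z
    rw [hZ, Polynomial.aeval_eq_sum_range, hdeg, Finset.sum_range_succ] at h0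
    have hc1 : Y.charpoly.coeff (n+1) = 1 := by
      have := (Matrix.charpoly_monic Y).coeff_natDegree
      rwa [hdeg] at this
    rw [hc1, one_smul] at h0
    exact eq_neg_of_add_eq_zero_right h0
  have hCH : Y ^ (n+1) = -∑ i ∈ Finset.range (n+1), c i • Y ^ i := hCHgen Y rfl
  have hCH' : Y' ^ (n+1) = -∑ i ∈ Finset.range (n+1), c i • Y' ^ i := hCHgen Y' hchar.symm
  -- all invariants agree
  have ha : ∀ k, (Y ^ k) L L = (Y' ^ k) L L := by
    intro k
    induction k using Nat.strong_induction_on with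
    | _ k ih =>
      rcases le_or_gt k n with hk | hk
      · exact hinvs k hk
      · have e1 : Y ^ k = Y ^ (k-(n+1)) * Y ^ (n+1) := by rw [← pow_add]; congr 1; omega
        have e1' : Y' ^ k = Y' ^ (k-(n+1)) * Y' ^ (n+1) := by rw [← pow_add]; congr 1; omega
        rw [e1, e1', hCH, hCH', mul_neg, mul_neg, Matrix.neg_apply,
          Matrix.neg_apply, Finset.mul_sum, Finset.mul_sum, Matrix.sum_apply, Matrix.sum_apply]
        congr 1
        apply Finset.sum_congr rfl
        intro i hi
        rw [Finset.mem_range] at hi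
        rw [mul_smul_comm, mul_smul_comm, ← pow_add, ← pow_add, Matrix.smul_apply,
          Matrix.smul_apply, ih ((k - (n+1)) + i) (by omega)]
  -- the Krylov matrices
  set M : Matrix (Fin (n+1)) (Fin (n+1)) E := Matrix.of (fun k j => (Y ^ (j:ℕ)) k L) with hMdef
  set M' : Matrix (Fin (n+1)) (Fin (n+1)) E := Matrix.of (fun k j => (Y' ^ (j:ℕ)) k L) with hM'def
  set N : Matrix (Fin (n+1)) (Fin (n+1)) E := Matrix.of (fun i k => (Y ^ (i:ℕ)) L k) with hNdef
  set N' : Matrix (Fin (n+1)) (Fin (n+1)) E := Matrix.of (fun i k => (Y' ^ (i:ℕ)) L k) with hN'def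
  have hNM : N * M = Matrix.of (fun i j : Fin (n+1) => (Y ^ ((i:ℕ) + (j:ℕ))) L L) := by
    ext i j
    rw [Matrix.mul_apply, Matrix.of_apply, pow_add, Matrix.mul_apply]
    rfl
  have hNM' : N' * M' = Matrix.of (fun i j : Fin (n+1) => (Y ^ ((i:ℕ) + (j:ℕ))) L L) := by
    ext i j
    have h1 : (N' * M') i j = (Y' ^ ((i:ℕ) + (j:ℕ))) L L := by
      rw [Matrix.mul_apply, pow_add, Matrix.mul_apply]
      rfl
    rw [h1, Matrix.of_apply, ha]
  have hdetM : IsUnit M.det := by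
    refine isUnit_iff_ne_zero.mpr (right_ne_zero_of_mul (a := N.det) ?_)
    rw [← Matrix.det_mul, hNM]; exact hreg
  have hdetM' : IsUnit M'.det := by
    refine isUnit_iff_ne_zero.mpr (right_ne_zero_of_mul (a := N'.det) ?_)
    rw [← Matrix.det_mul, hNM']; exact hreg
  -- the companion matrix
  set C : Matrix (Fin (n+1)) (Fin (n+1)) E :=
    Matrix.of (fun i j : Fin (n+1) =>
      if (j:ℕ) = n then -(c i) else if (i:ℕ) = (j:ℕ)+1 then 1 else 0) with hCdef
  have hcomp : ∀ Z : Matrix (Fin (n+1)) (Fin (n+1)) E,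
      Z ^ (n+1) = -∑ i ∈ Finset.range (n+1), c i • Z ^ i →
      Z * Matrix.of (fun k j : Fin (n+1) => (Z ^ ((j:ℕ))) k L) = Matrix.of (fun k j : Fin (n+1) => (Z ^ ((j:ℕ))) k L) * C := by
    intro Z hZ
    ext k j
    have hlhs : (Z * Matrix.of (fun k j : Fin (n+1) => (Z ^ ((j:ℕ))) k L)) k j = (Z ^ ((j:ℕ)+1)) k L := by
      rw [Matrix.mul_apply, pow_succ, pow_mul_comm', Matrix.mul_apply]
      rfl
    rw [hlhs, Matrix.mul_apply]
    rcases eq_or_lt_of_le (Nat.lt_succ_iff.mp j.isLt) with hj | hj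
    · -- last column
      have hsum : ∑ m : Fin (n+1), (Matrix.of (fun k j : Fin (n+1) => (Z ^ ((j:ℕ))) k L)) k m * C m j
          = ∑ m : Fin (n+1), -((c (m:ℕ) • Z ^ (m:ℕ)) k L) := by
        refine Finset.sum_congr rfl (fun m _ => ?_)
        simp only [hCdef, Matrix.of_apply, if_pos hj, Matrix.smul_apply, smul_eq_mul]
        ring
      rw [hsum, hj, hZ, Matrix.neg_apply, Matrix.sum_apply, ← Fin.sum_univ_eq_sum_range,
        ← Finset.sum_neg_distrib]
    · -- other columns
      rw [Finset.sum_eq_single (⟨(j:ℕ)+1, by omega⟩ : Fin (n+1))]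
      · simp only [hCdef, Matrix.of_apply]
        rw [if_neg (by omega)]
        simp
      · intro b _ hb
        have hbv : (b:ℕ) ≠ (j:ℕ)+1 := fun h => hb (Fin.ext h)
        simp only [hCdef, Matrix.of_apply]
        rw [if_neg (by omega), if_neg hbv, mul_zero]
      · intro h
        exact absurd (Finset.mem_univ _) h
  have hYM : Y * M = M * C := hcomp Y hCH
  have hY'M' : Y' * M' = M' * C := hcomp Y' hCH'
  -- the transporter
  set g' : Matrix (Fin (n+1)) (Fin (n+1)) E := M' * M⁻¹ with hg'def
  have hg'M : g' * M = M' := by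
    rw [hg'def, mul_assoc, Matrix.nonsing_inv_mul M hdetM, mul_one]
  have hMC : M⁻¹ * Y = C * M⁻¹ := by
    calc M⁻¹ * Y = M⁻¹ * Y * (M * M⁻¹) := by rw [Matrix.mul_nonsing_inv M hdetM, mul_one]
    _ = M⁻¹ * (Y * M) * M⁻¹ := by rw [mul_assoc, mul_assoc, mul_assoc]
    _ = M⁻¹ * (M * C) * M⁻¹ := by rw [hYM]
    _ = (M⁻¹ * M) * (C * M⁻¹) := by rw [mul_assoc, mul_assoc, mul_assoc]
    _ = C * M⁻¹ := by rw [Matrix.nonsing_inv_mul M hdetM, one_mul]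
  have hsemi : g' * Y = Y' * g' := by
    calc g' * Y = M' * (M⁻¹ * Y) := by rw [hg'def, mul_assoc]
    _ = M' * C * M⁻¹ := by rw [hMC, mul_assoc]
    _ = Y' * M' * M⁻¹ := by rw [hY'M']
    _ = Y' * g' := by rw [hg'def, mul_assoc]
  -- the reversal matrix and the σ-twist
  have hmappow : ∀ (Z : Matrix (Fin (n+1)) (Fin (n+1)) E) (j : ℕ),
      (Z ^ j).map ⇑σ = (Z.map ⇑σ) ^ j := by
    intro Z j
    simpa [RingHom.mapMatrix_apply] using map_pow ((σ : E →+* E).mapMatrix) Z j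
  set P : Matrix (Fin (n+1)) (Fin (n+1)) E :=
    Matrix.of (fun i j : Fin (n+1) => if (i:ℕ)+(j:ℕ) = n then (1:E) else 0) with hPdef
  have hrev : ∀ Z : Matrix (Fin (n+1)) (Fin (n+1)) E, Z * Z.map ⇑σ = 1 →
      Z ^ n * (Matrix.of (fun k j : Fin (n+1) => (Z ^ ((j:ℕ))) k L)).map ⇑σ
        = (Matrix.of (fun k j : Fin (n+1) => (Z ^ ((j:ℕ))) k L)) * P := by
    intro Z hZ
    have hZc : Commute Z (Z.map ⇑σ) := by
      unfold Commute SemiconjBy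
      rw [hZ, mul_eq_one_comm.mp hZ]
    have hpow : ∀ j : ℕ, j ≤ n → Z ^ n * (Z.map ⇑σ) ^ j = Z ^ (n - j) := by
      intro j hj
      have h1 : Z ^ j * (Z.map ⇑σ) ^ j = 1 := by
        rw [← Commute.mul_pow hZc, hZ, one_pow]
      calc Z ^ n * (Z.map ⇑σ) ^ j = Z ^ (n - j) * (Z ^ j * (Z.map ⇑σ) ^ j) := by
            rw [← mul_assoc, ← pow_add]
            congr 2
            omega
      _ = Z ^ (n - j) := by rw [h1, mul_one]
    ext k j
    have hlhs : (Z ^ n * (Matrix.of (fun k j : Fin (n+1) => (Z ^ ((j:ℕ))) k L)).map ⇑σ) k j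
        = (Z ^ (n - (j:ℕ))) k L := by
      rw [Matrix.mul_apply]
      have : ∀ m, (Matrix.of (fun k j : Fin (n+1) => (Z ^ ((j:ℕ))) k L)).map ⇑σ m j
          = ((Z.map ⇑σ) ^ (j:ℕ)) m L := by
        intro m
        rw [Matrix.map_apply, Matrix.of_apply, ← hmappow]
        rfl
      rw [Finset.sum_congr rfl (fun m _ => by rw [this m]), ← Matrix.mul_apply,
        hpow (j:ℕ) (Nat.lt_succ_iff.mp j.isLt)]
    rw [hlhs, Matrix.mul_apply]
    rw [Finset.sum_eq_single (⟨n - (j:ℕ), by omega⟩ : Fin (n+1))]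
    · simp only [hPdef, Matrix.of_apply]
      rw [if_pos (by rw [Fin.val_mk]; omega), mul_one]
    · intro b _ hb
      have hbv : (b:ℕ) ≠ n - (j:ℕ) := fun h => hb (Fin.ext (by simp [h]))
      simp only [hPdef, Matrix.of_apply]
      rw [if_neg (by omega), mul_zero]
    · intro h
      exact absurd (Finset.mem_univ _) h
  have hσM : Y ^ n * M.map ⇑σ = M * P := hrev Y hY
  have hσM' : Y' ^ n * M'.map ⇑σ = M' * P := hrev Y' hY'
  -- g' is σ-fixed
  have hY'unit : IsUnit Y' := (Matrix.isUnit_iff_isUnit_det Y').mpr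
    (IsUnit.of_mul_eq_one _ (by rw [← Matrix.det_mul, hY', Matrix.det_one]))
  have h1 : g' * (M.map ⇑σ) = M'.map ⇑σ := by
    have h2 : Y' ^ n * (g' * M.map ⇑σ) = Y' ^ n * (M'.map ⇑σ) := by
      calc Y' ^ n * (g' * M.map ⇑σ) = (g' * Y ^ n) * M.map ⇑σ := by
            rw [SemiconjBy.pow_right hsemi n, mul_assoc (Y' ^ n) g' (M.map ⇑σ)]
      _ = g' * (Y ^ n * M.map ⇑σ) := by rw [mul_assoc g' (Y ^ n) (M.map ⇑σ)]
      _ = (g' * M) * P := by rw [hσM, mul_assoc g' M P]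
      _ = M' * P := by rw [hg'M]
      _ = Y' ^ n * (M'.map ⇑σ) := hσM'.symm
    exact (hY'unit.pow n).mul_left_cancel h2
  have hdetMσ : IsUnit (M.map ⇑σ).det := by
    have hd : (M.map ⇑σ).det = σ M.det := by
      have h := RingHom.map_det (σ : E →+* E) M
      rw [RingHom.mapMatrix_apply] at h
      exact h.symm
    rw [hd, isUnit_iff_ne_zero]
    simpa using isUnit_iff_ne_zero.1 hdetM
  have hg'σ : g'.map ⇑σ = g' := by
    have h3 : g'.map ⇑σ * M.map ⇑σ = g' * M.map ⇑σ := by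
      have h4 : (g' * M).map ⇑σ = g'.map ⇑σ * M.map ⇑σ := Matrix.map_mul (f := (σ : E →+* E))
      rw [← h4, hg'M, h1]
    calc g'.map ⇑σ = g'.map ⇑σ * (M.map ⇑σ * (M.map ⇑σ)⁻¹) := by
          rw [Matrix.mul_nonsing_inv _ hdetMσ, mul_one]
    _ = (g'.map ⇑σ * M.map ⇑σ) * (M.map ⇑σ)⁻¹ := by rw [mul_assoc]
    _ = (g' * M.map ⇑σ) * (M.map ⇑σ)⁻¹ := by rw [h3]
    _ = g' := by rw [mul_assoc, Matrix.mul_nonsing_inv _ hdetMσ, mul_one]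
  -- block structure of g'
  have hg'lastcol : ∀ k, g' k L = (1 : Matrix (Fin (n+1)) (Fin (n+1)) E) k L := by
    intro k
    have h : (g' * M) k (⟨0, n.succ_pos⟩ : Fin (n+1)) = M' k (⟨0, n.succ_pos⟩ : Fin (n+1)) := by
      rw [hg'M]
    rw [Matrix.mul_apply] at h
    have hM0 : ∀ m, M m (⟨0, n.succ_pos⟩ : Fin (n+1)) = (1 : Matrix (Fin (n+1)) (Fin (n+1)) E) m L := by
      intro m
      show (Y ^ (0:ℕ)) m L = _
      rw [pow_zero]
    have hLHS : ∑ m, g' k m * M m (⟨0, n.succ_pos⟩ : Fin (n+1)) = g' k L := by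
      rw [Finset.sum_congr rfl (fun m _ => by rw [hM0 m]), ← Matrix.mul_apply, mul_one]
    have hRHS : M' k (⟨0, n.succ_pos⟩ : Fin (n+1)) = (1 : Matrix (Fin (n+1)) (Fin (n+1)) E) k L := by
      show (Y' ^ (0:ℕ)) k L = _
      rw [pow_zero]
    rw [hLHS, hRHS] at h
    exact h
  have hg'lastrow : ∀ m, g' L m = (1 : Matrix (Fin (n+1)) (Fin (n+1)) E) L m := by
    have hD : ∀ j, ((g' - 1) * M) L j = 0 := by
      intro j
      rw [Matrix.sub_mul, hg'M, one_mul, Matrix.sub_apply]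
      exact sub_eq_zero.mpr ((ha (j:ℕ)).symm)
    intro m
    have h1 : (g' - 1) L m = 0 := by
      have h2 : ((g' - 1) * (M * M⁻¹)) L m = (g' - 1) L m := by
        rw [Matrix.mul_nonsing_inv _ hdetM, mul_one]
      rw [← h2, ← mul_assoc (g' - 1) M M⁻¹, Matrix.mul_apply]
      apply Finset.sum_eq_zero
      intro j _
      rw [hD j, zero_mul]
    rw [Matrix.sub_apply] at h1
    exact sub_eq_zero.mp h1
  -- entries of g' are fixed by σ, hence lie in F
  have hfix : ∀ i j : Fin (n+1), σ (g' i j) = g' i j := by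
    intro i j
    exact congrFun (congrFun hg'σ i) j
  choose Gf hGf using fun (i j : Fin (n+1)) =>
    fixed_mem_range F E hquad σ hσ (g' i j) (hfix i j)
  set g0 : Matrix (Fin n) (Fin n) F :=
    Matrix.of (fun i j : Fin n => Gf i.castSucc j.castSucc) with hg0def
  have hblk : blk (g0.map (algebraMap F E)) = g' := by
    ext k j
    induction k using Fin.lastCases with
    | last =>
      induction j using Fin.lastCases with
      | last => rw [blk_ll, hg'lastrow, Matrix.one_apply_eq]
      | cast j =>
        rw [blk_lc, hg'lastrow]
        exact (Matrix.one_apply_ne (Fin.castSucc_lt_last j).ne').symm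
    | cast i =>
      induction j using Fin.lastCases with
      | last =>
        rw [blk_cl, hg'lastcol]
        exact (Matrix.one_apply_ne (Fin.castSucc_lt_last i).ne).symm
      | cast j =>
        rw [blk_cc, Matrix.map_apply]
        exact hGf i.castSucc j.castSucc
  -- g0 is invertible
  have hdetg' : IsUnit g'.det := by
    rw [hg'def, Matrix.det_mul]
    exact hdetM'.mul (Matrix.isUnit_nonsing_inv_det M hdetM)
  have hdetg0 : IsUnit g0.det := by
    rw [isUnit_iff_ne_zero]
    intro h0
    have h1 : algebraMap F E g0.det = g'.det := by
      have h2 := RingHom.map_det (algebraMap F E) g0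
      rw [RingHom.mapMatrix_apply] at h2
      rw [h2, ← blk_det (g0.map (algebraMap F E)), hblk]
    rw [h0, map_zero] at h1
    exact isUnit_iff_ne_zero.mp hdetg' h1.symm
  have hg0unit : IsUnit g0 := (Matrix.isUnit_iff_isUnit_det g0).mpr hdetg0
  refine ⟨hg0unit.unit, ?_, ?_⟩
  · show Y' = blk ((hg0unit.unit : Matrix (Fin n) (Fin n) F).map (algebraMap F E)) * Y *
      blk (((hg0unit.unit⁻¹ : (Matrix (Fin n) (Fin n) F)ˣ) : Matrix (Fin n) (Fin n) F).map (algebraMap F E))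
    rw [Matrix.coe_units_inv, IsUnit.unit_spec]
    have hinvmul : blk (g0.map (algebraMap F E)) * blk ((g0⁻¹).map (algebraMap F E)) = 1 := by
      rw [blk_mul, ← Matrix.map_mul (f := algebraMap F E), Matrix.mul_nonsing_inv g0 hdetg0,
        Matrix.map_one (algebraMap F E) (map_zero _) (map_one _), blk_one]
    calc Y' = Y' * (blk (g0.map (algebraMap F E)) * blk ((g0⁻¹).map (algebraMap F E))) := by
          rw [hinvmul, mul_one]
    _ = (Y' * g') * blk ((g0⁻¹).map (algebraMap F E)) := by
          rw [hblk, ← mul_assoc Y' g' (blk ((g0⁻¹).map (algebraMap F E)))]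
    _ = (g' * Y) * blk ((g0⁻¹).map (algebraMap F E)) := by rw [hsemi]
    _ = blk (g0.map (algebraMap F E)) * Y * blk ((g0⁻¹).map (algebraMap F E)) := by rw [hblk]
  · -- uniqueness
    intro u hu
    replace hu : Y' = blk ((u : Matrix (Fin n) (Fin n) F).map (algebraMap F E)) * Y *
        blk (((u⁻¹ : (Matrix (Fin n) (Fin n) F)ˣ) : Matrix (Fin n) (Fin n) F).map (algebraMap F E)) := hu
    set Bu := blk ((u : Matrix (Fin n) (Fin n) F).map (algebraMap F E)) with hBudef
    set Bu' := blk (((u⁻¹ : (Matrix (Fin n) (Fin n) F)ˣ) : Matrix (Fin n) (Fin n) F).map (algebraMap F E)) with hBu'def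
    have hBuinv : Bu' * Bu = 1 := by
      have hui : ((u⁻¹ : (Matrix (Fin n) (Fin n) F)ˣ) : Matrix (Fin n) (Fin n) F) *
          (u : Matrix (Fin n) (Fin n) F) = 1 := u.inv_mul
      rw [hBudef, hBu'def, blk_mul, ← Matrix.map_mul (f := algebraMap F E), hui,
        Matrix.map_one (algebraMap F E) (map_zero _) (map_one _), blk_one]
    have hBusemi : Bu * Y = Y' * Bu := by
      calc Bu * Y = Bu * Y * (Bu' * Bu) := by rw [hBuinv, mul_one]
      _ = (Bu * Y * Bu') * Bu := by rw [mul_assoc (Bu * Y) Bu' Bu]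
      _ = Y' * Bu := by rw [← hu]
    -- D commutes with Y and fixes the last basis vector, hence D * M = M
    set Bg : Matrix (Fin (n+1)) (Fin (n+1)) E := blk ((g0⁻¹).map (algebraMap F E)) with hBgdef
    have hBg1 : Bg * g' = 1 := by
      rw [hBgdef, ← hblk, blk_mul, ← Matrix.map_mul (f := algebraMap F E),
        Matrix.nonsing_inv_mul g0 hdetg0,
        Matrix.map_one (algebraMap F E) (map_zero _) (_root_.map_one _), blk_one]
    have hBg2 : g' * Bg = 1 := by
      rw [hBgdef, ← hblk, blk_mul, ← Matrix.map_mul (f := algebraMap F E),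
        Matrix.mul_nonsing_inv g0 hdetg0,
        Matrix.map_one (algebraMap F E) (map_zero _) (_root_.map_one _), blk_one]
    have hYBg : Y * Bg = Bg * Y' := by
      calc Y * Bg = (Bg * g') * (Y * Bg) := by rw [hBg1, one_mul]
      _ = Bg * ((g' * Y) * Bg) := by rw [mul_assoc Bg g' (Y * Bg), ← mul_assoc g' Y Bg]
      _ = Bg * ((Y' * g') * Bg) := by rw [hsemi]
      _ = (Bg * Y') * (g' * Bg) := by rw [mul_assoc Y' g' Bg, ← mul_assoc Bg Y' (g' * Bg)]
      _ = Bg * Y' := by rw [hBg2, mul_one]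
    set D : Matrix (Fin (n+1)) (Fin (n+1)) E := Bg * Bu with hDdef
    have hDY : D * Y = Y * D := by
      calc D * Y = Bg * (Bu * Y) := by rw [hDdef, mul_assoc Bg Bu Y]
      _ = Bg * (Y' * Bu) := by rw [hBusemi]
      _ = (Bg * Y') * Bu := by rw [mul_assoc Bg Y' Bu]
      _ = (Y * Bg) * Bu := by rw [hYBg]
      _ = Y * D := by rw [hDdef, mul_assoc Y Bg Bu]
    have hDblk : D = blk ((g0⁻¹ * (u : Matrix (Fin n) (Fin n) F)).map (algebraMap F E)) := by
      rw [hDdef, hBgdef, hBudef, blk_mul, ← Matrix.map_mul (f := algebraMap F E)]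
    have hDcol : ∀ m, D m L = (1 : Matrix (Fin (n+1)) (Fin (n+1)) E) m L := by
      intro m
      induction m using Fin.lastCases with
      | last => rw [hDblk, blk_ll, Matrix.one_apply_eq]
      | cast i =>
        rw [hDblk, blk_cl]
        exact (Matrix.one_apply_ne (Fin.castSucc_lt_last i).ne).symm
    have hDM : D * M = M := by
      ext k j
      have hsc : D * Y ^ (j:ℕ) = Y ^ (j:ℕ) * D := SemiconjBy.pow_right hDY (j:ℕ)
      have h6 : (D * M) k j = (D * Y ^ (j:ℕ)) k L := by
        simp only [Matrix.mul_apply]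
        rfl
      rw [h6, hsc, Matrix.mul_apply]
      rw [Finset.sum_congr rfl (fun m _ => by rw [hDcol m]), ← Matrix.mul_apply, mul_one]
      rfl
    have hD1 : D = 1 := by
      calc D = (D * M) * M⁻¹ := by
            rw [mul_assoc D M M⁻¹, Matrix.mul_nonsing_inv M hdetM, mul_one]
      _ = M * M⁻¹ := by rw [hDM]
      _ = 1 := Matrix.mul_nonsing_inv M hdetM
    have h8 : blk ((g0⁻¹ * (u : Matrix (Fin n) (Fin n) F)).map (algebraMap F E)) = 1 := by
      rw [← hDblk]
      exact hD1
    have hW : g0⁻¹ * (u : Matrix (Fin n) (Fin n) F) = 1 := by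
      ext i j
      have h9 : ((g0⁻¹ * (u : Matrix (Fin n) (Fin n) F)).map (algebraMap F E)) i j
          = (1 : Matrix (Fin (n+1)) (Fin (n+1)) E) i.castSucc j.castSucc := by
        rw [← blk_cc ((g0⁻¹ * (u : Matrix (Fin n) (Fin n) F)).map (algebraMap F E)) i j, h8]
      rw [Matrix.map_apply] at h9
      apply (algebraMap F E).injective
      rw [h9]
      by_cases hij : i = j
      · subst hij
        rw [Matrix.one_apply_eq, Matrix.one_apply_eq, _root_.map_one]
      · rw [Matrix.one_apply_ne (fun h => hij (Fin.castSucc_injective n h)),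
          Matrix.one_apply_ne hij, map_zero]
    have hu0 : (u : Matrix (Fin n) (Fin n) F) = g0 := by
      calc (u : Matrix (Fin n) (Fin n) F) = (g0 * g0⁻¹) * (u : Matrix (Fin n) (Fin n) F) := by
            rw [Matrix.mul_nonsing_inv g0 hdetg0, one_mul]
      _ = g0 * (g0⁻¹ * (u : Matrix (Fin n) (Fin n) F)) := by
            rw [mul_assoc g0 g0⁻¹ (u : Matrix (Fin n) (Fin n) F)]
      _ = g0 := by rw [hW, mul_one]
    exact Units.ext (by rw [hu0, IsUnit.unit_spec])
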